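/- arXiv:2308.09261 — 3 statements merged into one kernel-verified Lean document; each statement's English description precedes it below -/
import Mathlib

section
/- Let B and C be bounded linear operators on H admitting A-adjoints B♯ and C♯. Then (1/2)·w_A(B² + C²) + (1/2)·max{w_A(B), w_A(C)}·| w_A(B+C) − w_A(B−C) | ≤ (w_{A,e}(B,C))². -/
noncomputable section

open scoped ComplexInnerProductSpace

variable {H : Type*} [NormedAddCommGroup H] [InnerProductSpace ℂ H] [CompleteSpace H]

/-- The semi-inner product induced by a positive operator `A`:
`⟨x,y⟩_A = ⟨Ax,y⟩` (linear in the first argument, following the paper's convention). -/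
def innerA (A : H →L[ℂ] H) (x y : H) : ℂ := ⟪y, A x⟫

/-- The seminorm induced by `A`: `‖x‖_A = ⟨Ax,x⟩^{1/2}`. -/
def normA (A : H →L[ℂ] H) (x : H) : ℝ := Real.sqrt (innerA A x x).re

/-- The `A`-numerical radius `w_A(T) = sup { |⟨Tx,x⟩_A| : ‖x‖_A = 1 }`. -/
def wA (A T : H →L[ℂ] H) : ℝ :=
  sSup {r : ℝ | ∃ x : H, normA A x = 1 ∧ r = ‖innerA A (T x) x‖}

/-- The `A`-Crawford number `c_A(T) = inf { |⟨Tx,x⟩_A| : ‖x‖_A = 1 }`. -/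
def cA (A T : H →L[ℂ] H) : ℝ :=
  sInf {r : ℝ | ∃ x : H, normA A x = 1 ∧ r = ‖innerA A (T x) x‖}

/-- The `A`-operator seminorm `‖T‖_A = sup { ‖Tx‖_A : ‖x‖_A = 1 }`. -/
def opNormA (A T : H →L[ℂ] H) : ℝ :=
  sSup {r : ℝ | ∃ x : H, normA A x = 1 ∧ r = normA A (T x)}

/-- The `A`-Euclidean operator radius of the pair `(B, C)`. -/
def wAe (A B C : H →L[ℂ] H) : ℝ :=
  sSup {r : ℝ | ∃ x : H, normA A x = 1 ∧
    r = Real.sqrt ((‖innerA A (B x) x‖)^2 + (‖innerA A (C x) x‖)^2)}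

/-- The `A`-Euclidean operator seminorm of the pair `(B, C)`. -/
def normAe (A B C : H →L[ℂ] H) : ℝ :=
  sSup {r : ℝ | ∃ x : H, normA A x = 1 ∧
    r = Real.sqrt ((normA A (B x))^2 + (normA A (C x))^2)}

/-- `Re_A(T) = (T + T♯)/2`, where `Ts` is an `A`-adjoint of `T`. -/
def ReA (T Ts : H →L[ℂ] H) : H →L[ℂ] H := (2 : ℂ)⁻¹ • (T + Ts)

/-- `Im_A(T) = (T - T♯)/(2i)`, where `Ts` is an `A`-adjoint of `T`. -/
def ImA (T Ts : H →L[ℂ] H) : H →L[ℂ] H := (2 * Complex.I)⁻¹ • (T - Ts)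

set_option linter.unusedSectionVars false
set_option maxHeartbeats 1000000

open ContinuousLinearMap Complex

variable {A : H →L[ℂ] H}

lemma innerA_self_nonneg (hA : A.IsPositive) (x : H) : 0 ≤ (innerA A x x).re := by
  have h : 0 ≤ RCLike.re (⟪x, A x⟫ : ℂ) := by
    rw [inner_re_symm]; exact hA.re_inner_nonneg_left x
  simpa [innerA, RCLike.re_to_complex] using h

lemma normA_nonneg (x : H) : 0 ≤ normA A x := Real.sqrt_nonneg _

lemma normA_sq (hA : A.IsPositive) (x : H) : (normA A x)^2 = (innerA A x x).re :=
  Real.sq_sqrt (innerA_self_nonneg hA x)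

lemma inner_A_symm (hA : A.IsPositive) (v w : H) : (⟪A v, w⟫ : ℂ) = ⟪v, A w⟫ := by
  conv_lhs => rw [← hA.isSelfAdjoint.adjoint_eq]
  exact ContinuousLinearMap.adjoint_inner_left A w v

lemma innerA_cs (hA : A.IsPositive) (x y : H) :
    ‖innerA A x y‖ ≤ normA A x * normA A y := by
  by_cases h0 : innerA A x y = 0
  · rw [h0]
    simpa using mul_nonneg (normA_nonneg x) (normA_nonneg y)
  have hz : innerA A x y = ⟪y, A x⟫ := rfl
  set z : ℂ := ⟪y, A x⟫ with hzdef
  rw [hz]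
  set a : ℝ := ‖z‖ with hadef
  have ha : 0 < a := by
    have : z ≠ 0 := by rw [← hz]; exact h0
    exact norm_pos_iff.mpr this
  set μ : ℂ := z / (a : ℂ) with hμ
  have hμz : (starRingEnd ℂ) μ * z = (a : ℂ) := by
    rw [hμ, map_div₀, Complex.conj_ofReal, div_mul_eq_mul_div]
    rw [mul_comm, Complex.mul_conj, Complex.normSq_eq_norm_sq, ← hadef]
    rw [div_eq_iff (by exact_mod_cast ha.ne' : (a:ℂ) ≠ 0)]
    push_cast
    ring
  have hμsq : (starRingEnd ℂ) μ * μ = 1 := by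
    have habs : ‖μ‖ = 1 := by
      rw [hμ, norm_div, Complex.norm_real, Real.norm_eq_abs, ← hadef, abs_of_pos ha, div_self ha.ne']
    rw [mul_comm, Complex.mul_conj, Complex.normSq_eq_norm_sq, habs]
    norm_num
  set u : H := μ • y with hu
  have hux : (⟪u, A x⟫ : ℂ) = (a : ℂ) := by
    rw [hu, inner_smul_left, hμz]
  have hxu : (⟪x, A u⟫ : ℂ) = (a : ℂ) := by
    rw [← inner_A_symm hA, ← inner_conj_symm, hux, Complex.conj_ofReal]
  have huu : (⟪u, A u⟫ : ℂ) = ⟪y, A y⟫ := by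
    rw [hu, map_smul, inner_smul_left, inner_smul_right, ← mul_assoc, hμsq, one_mul]
  have key : ∀ t : ℝ, 0 ≤ (normA A y)^2 * (t * t) + (-(2*a)) * t + (normA A x)^2 := by
    intro t
    have h := innerA_self_nonneg hA (x - (t:ℂ) • u)
    have expand : innerA A (x - (t:ℂ) • u) (x - (t:ℂ) • u) =
        innerA A x x - (t:ℂ) * ⟪x, A u⟫ - (t:ℂ) * ⟪u, A x⟫ + ((t*t : ℝ):ℂ) * ⟪u, A u⟫ := by
      simp only [innerA, map_sub, map_smulₛₗ, RingHom.id_apply, inner_sub_left, inner_sub_right,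
        inner_smul_left, inner_smul_right, Complex.conj_ofReal]
      push_cast
      ring
    rw [expand] at h
    have h2 : (⟪u, A x⟫ : ℂ).re = a := by rw [hux, Complex.ofReal_re]
    have h2' : (⟪x, A u⟫ : ℂ).re = a := by rw [hxu, Complex.ofReal_re]
    have h3 : (⟪u, A u⟫ : ℂ).re = (normA A y)^2 := by
      rw [huu]; exact (normA_sq hA y).symm
    have h4 : (innerA A x x).re = (normA A x)^2 := (normA_sq hA x).symm
    simp only [Complex.add_re, Complex.sub_re, Complex.re_ofReal_mul, h2, h2', h3, h4] at h
    linarith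
  have hd := discrim_le_zero key
  rw [discrim] at hd
  have hp := normA_nonneg (A := A) x
  have hq := normA_nonneg (A := A) y
  nlinarith [hd, ha, mul_nonneg hp hq]

lemma normA_le_norm (hA : A.IsPositive) (v : H) : normA A v ≤ Real.sqrt ‖A‖ * ‖v‖ := by
  rw [normA, ← Real.sqrt_sq (norm_nonneg v), ← Real.sqrt_mul (norm_nonneg A)]
  apply Real.sqrt_le_sqrt
  have h1 : (innerA A v v).re ≤ ‖innerA A v v‖ := Complex.re_le_norm _
  have h2 : ‖innerA A v v‖ ≤ ‖A v‖ * ‖v‖ := by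
    rw [innerA]
    calc ‖(⟪v, A v⟫ : ℂ)‖ = ‖(⟪v, A v⟫ : ℂ)‖ := rfl
    _ ≤ ‖v‖ * ‖A v‖ := norm_inner_le_norm v (A v)
    _ = ‖A v‖ * ‖v‖ := mul_comm _ _
  have h3 : ‖A v‖ * ‖v‖ ≤ ‖A‖ * (‖v‖ * ‖v‖) := by
    have := A.le_opNorm v
    nlinarith [norm_nonneg v]
  calc (innerA A v v).re ≤ ‖A v‖ * ‖v‖ := le_trans h1 h2
  _ ≤ ‖A‖ * (‖v‖ * ‖v‖) := h3
  _ = ‖A‖ * ‖v‖ ^ 2 := by ring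

lemma normA_smul (hA : A.IsPositive) (c : ℂ) (x : H) :
    normA A (c • x) = ‖c‖ * normA A x := by
  have h : innerA A (c • x) (c • x) = ((‖c‖ : ℝ)^2 : ℝ) * ⟪x, A x⟫ := by
    rw [innerA, map_smul, inner_smul_left, inner_smul_right, ← mul_assoc,
      mul_comm ((starRingEnd ℂ) c) c, Complex.mul_conj, Complex.normSq_eq_norm_sq]
  rw [normA, h, Complex.re_ofReal_mul, Real.sqrt_mul (by positivity), Real.sqrt_sq (by positivity)]
  rfl

lemma innerA_conj (hA : A.IsPositive) {M Ms : H →L[ℂ] H}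
    (hM : A.comp Ms = (ContinuousLinearMap.adjoint M).comp A) (x : H) :
    innerA A (Ms x) x = (starRingEnd ℂ) (innerA A (M x) x) := by
  have h1 : A (Ms x) = (ContinuousLinearMap.adjoint M) (A x) := by
    have := ContinuousLinearMap.ext_iff.mp hM x
    simpa using this
  rw [innerA, h1, ContinuousLinearMap.adjoint_inner_right]
  rw [innerA, ← inner_conj_symm, inner_A_symm hA]

lemma apply_A_adj (hA : A.IsPositive) {M Ms : H →L[ℂ] H}
    (hM : A.comp Ms = (ContinuousLinearMap.adjoint M).comp A) (v w : H) :
    (⟪v, A (Ms w)⟫ : ℂ) = ⟪M v, A w⟫ := by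
  have h1 : A (Ms w) = (ContinuousLinearMap.adjoint M) (A w) := by
    have := ContinuousLinearMap.ext_iff.mp hM w
    simpa using this
  rw [h1, ContinuousLinearMap.adjoint_inner_right]

lemma abound (hA : A.IsPositive) {T Ts : H →L[ℂ] H}
    (hT : A.comp Ts = (ContinuousLinearMap.adjoint T).comp A) :
    ∃ k : ℝ, 0 ≤ k ∧ ∀ x : H, normA A (T x) ≤ k * normA A x := by
  classical
  set S : H →L[ℂ] H := Ts * T with hSdef
  have hTs' : (ContinuousLinearMap.adjoint Ts).comp A = A.comp T := by
    have h := congrArg ContinuousLinearMap.adjoint hT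
    rw [ContinuousLinearMap.adjoint_comp, ContinuousLinearMap.adjoint_comp,
      ContinuousLinearMap.adjoint_adjoint, hA.isSelfAdjoint.adjoint_eq] at h
    exact h
  have hSadj : A.comp S = (ContinuousLinearMap.adjoint S).comp A := by
    have h1 : ContinuousLinearMap.adjoint S
        = (ContinuousLinearMap.adjoint T).comp (ContinuousLinearMap.adjoint Ts) := by
      rw [hSdef]
      exact ContinuousLinearMap.adjoint_comp Ts T
    ext v
    have e1 : A (Ts (T v)) = (ContinuousLinearMap.adjoint T) (A (T v)) :=
      ContinuousLinearMap.ext_iff.mp hT (T v)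
    have e2 : A (T v) = (ContinuousLinearMap.adjoint Ts) (A v) :=
      (ContinuousLinearMap.ext_iff.mp hTs' v).symm
    calc (A.comp S) v = A (Ts (T v)) := rfl
    _ = (ContinuousLinearMap.adjoint T) ((ContinuousLinearMap.adjoint Ts) (A v)) := by
        rw [e1, e2]
    _ = ((ContinuousLinearMap.adjoint S).comp A) v := by rw [h1]; rfl
  -- moving powers of S across A
  have hS1 : ∀ v w : H, (⟪v, A (S w)⟫ : ℂ) = ⟪S v, A w⟫ := apply_A_adj hA hSadj
  have hT1 : ∀ v w : H, (⟪v, A (T w)⟫ : ℂ) = ⟪Ts v, A w⟫ := apply_A_adj hA hTs'.symm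
  have hmove : ∀ (k : ℕ) (v w : H), (⟪v, A ((S^k) w)⟫ : ℂ) = ⟪(S^k) v, A w⟫ := by
    intro k
    induction k with
    | zero => intro v w; simp
    | succ k ih =>
      intro v w
      have e1 : (S^(k+1)) w = (S^k) (S w) := by
        rw [pow_succ]; rfl
      have e2 : S ((S^k) v) = (S^(k+1)) v := by
        rw [pow_succ']; rfl
      rw [e1, ih v (S w), hS1 ((S^k) v) w, e2]
  set M : ℝ := ‖S‖ + 1 with hMdef
  have hM1 : (1:ℝ) ≤ M := by have := norm_nonneg S; linarith
  have hM0 : (0:ℝ) < M := by linarith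
  refine ⟨Real.sqrt M, Real.sqrt_nonneg M, fun x => ?_⟩
  set r : ℝ := normA A x with hrdef
  have hr0 : 0 ≤ r := normA_nonneg x
  -- key recursive inequality
  have hkey : ∀ k : ℕ, (normA A ((S^k) x))^2 ≤ normA A ((S^(2*k)) x) * r := by
    intro k
    have h1 : (normA A ((S^k) x))^2 = (⟪(S^k) x, A ((S^k) x)⟫ : ℂ).re := normA_sq hA _
    have h2 : (⟪(S^k) x, A ((S^k) x)⟫ : ℂ) = ⟪(S^(2*k)) x, A x⟫ := by
      rw [hmove k ((S^k) x) x]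
      congr 1
      rw [two_mul, pow_add]
      rfl
    rw [h1, h2]
    calc (⟪(S^(2*k)) x, A x⟫ : ℂ).re ≤ ‖(⟪(S^(2*k)) x, A x⟫ : ℂ)‖ :=
          Complex.re_le_norm _
    _ = ‖innerA A x ((S^(2*k)) x)‖ := rfl
    _ ≤ normA A x * normA A ((S^(2*k)) x) := innerA_cs hA _ _
    _ = normA A ((S^(2*k)) x) * r := by rw [hrdef, mul_comm]
  have hbase : (normA A (T x))^2 ≤ normA A (S x) * r := by
    have h1 : (normA A (T x))^2 = (⟪T x, A (T x)⟫ : ℂ).re := normA_sq hA _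
    have h2 : (⟪T x, A (T x)⟫ : ℂ) = ⟪S x, A x⟫ := hT1 (T x) x
    rw [h1, h2]
    calc (⟪S x, A x⟫ : ℂ).re ≤ ‖(⟪S x, A x⟫ : ℂ)‖ := Complex.re_le_norm _
    _ = ‖innerA A x (S x)‖ := rfl
    _ ≤ normA A x * normA A (S x) := innerA_cs hA _ _
    _ = normA A (S x) * r := by rw [hrdef, mul_comm]
  set u : ℝ := normA A (T x) with hudef
  have hu0 : 0 ≤ u := normA_nonneg _
  by_cases hr : r = 0
  · -- degenerate case
    rw [hr] at hbase
    simp only [mul_zero] at hbase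
    have : u = 0 := le_antisymm (by nlinarith) hu0
    rw [this, hr, mul_zero]
  replace hr : 0 < r := lt_of_le_of_ne hr0 (Ne.symm hr)
  -- induction
  have hP : ∀ n : ℕ, u^(2^(n+1)) * r ≤ normA A ((S^(2^n)) x) * r^(2^(n+1)) := by
    intro n
    induction n with
    | zero =>
      have : u^2 * r ≤ (normA A (S x) * r) * r :=
        mul_le_mul_of_nonneg_right (by simpa using hbase) hr0
      calc u^(2^1) * r = u^2 * r := by norm_num
      _ ≤ (normA A (S x) * r) * r := this
      _ = normA A ((S^(2^0)) x) * r^(2^1) := by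
          norm_num [pow_one]; ring
    | succ n ih =>
      have hgn : 0 ≤ normA A ((S^(2^n)) x) := normA_nonneg _
      have hsq : (u^(2^(n+1)) * r)^2 ≤ (normA A ((S^(2^n)) x) * r^(2^(n+1)))^2 := by
        apply pow_le_pow_left₀ (by positivity) ih
      have hk := hkey (2^n)
      have h2 : 2 * 2^n = 2^(n+1) := by ring
      rw [h2] at hk
      have expand : (u^(2^(n+1)) * r)^2 = u^(2^(n+2)) * r * r := by
        have h : (2^(n+1)) * 2 = 2^(n+2) := by ring
        calc (u^(2^(n+1)) * r)^2 = (u^(2^(n+1)))^2 * r^2 := by ring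
        _ = u^((2^(n+1)) * 2) * r^2 := by rw [pow_mul]
        _ = u^(2^(n+2)) * r * r := by rw [h]; ring
      have expand2 : (normA A ((S^(2^n)) x) * r^(2^(n+1)))^2
          = (normA A ((S^(2^n)) x))^2 * (r^(2^(n+1)))^2 := by ring
      have step : u^(2^(n+2)) * r * r ≤ (normA A ((S^(2^(n+1))) x) * r) * (r^(2^(n+1)))^2 := by
        rw [← expand]
        calc (u^(2^(n+1)) * r)^2 ≤ (normA A ((S^(2^n)) x))^2 * (r^(2^(n+1)))^2 := by
              rw [← expand2]; exact hsq
        _ ≤ (normA A ((S^(2^(n+1))) x) * r) * (r^(2^(n+1)))^2 :=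
              mul_le_mul_of_nonneg_right hk (by positivity)
      have final : u^(2^(n+2)) * r ≤ normA A ((S^(2^(n+1))) x) * r^(2^(n+2)) := by
        have h3 : (normA A ((S^(2^(n+1))) x) * r) * (r^(2^(n+1)))^2
            = (normA A ((S^(2^(n+1))) x) * r^(2^(n+2))) * r := by
          have h : (2^(n+1)) * 2 = 2^(n+2) := by ring
          rw [← pow_mul, h]; ring
        rw [h3] at step
        exact le_of_mul_le_mul_right (by linarith [step]) hr
      exact final
  -- norm bounds
  set c : ℝ := Real.sqrt ‖A‖ * ‖x‖ with hcdef
  have hrc : r ≤ c := normA_le_norm hA x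
  have hc0 : 0 < c := lt_of_lt_of_le hr hrc
  have hgb : ∀ k : ℕ, 0 < k → normA A ((S^k) x) ≤ c * M^k := by
    intro k hk
    calc normA A ((S^k) x) ≤ Real.sqrt ‖A‖ * ‖(S^k) x‖ := normA_le_norm hA _
    _ ≤ Real.sqrt ‖A‖ * (‖S^k‖ * ‖x‖) := by
        apply mul_le_mul_of_nonneg_left ((S^k).le_opNorm x) (Real.sqrt_nonneg _)
    _ ≤ Real.sqrt ‖A‖ * (‖S‖^k * ‖x‖) := by
        apply mul_le_mul_of_nonneg_left _ (Real.sqrt_nonneg _)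
        exact mul_le_mul_of_nonneg_right (norm_pow_le' S hk) (norm_nonneg x)
    _ ≤ Real.sqrt ‖A‖ * (M^k * ‖x‖) := by
        apply mul_le_mul_of_nonneg_left _ (Real.sqrt_nonneg _)
        apply mul_le_mul_of_nonneg_right _ (norm_nonneg x)
        exact pow_le_pow_left₀ (norm_nonneg S) (by rw [hMdef]; linarith) k
    _ = c * M^k := by rw [hcdef]; ring
  -- pass to rpow form
  have hstep : ∀ n : ℕ, u ≤ c^(((2:ℝ)^(n+1))⁻¹) * M^((1:ℝ)/2) * r / r^(((2:ℝ)^(n+1))⁻¹) := by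
    intro n
    set K : ℕ := 2^(n+1) with hK
    have hKpos : (0:ℝ) < (K:ℝ) := by positivity
    have hKcast : ((K:ℕ):ℝ) = (2:ℝ)^(n+1) := by push_cast [hK]; ring
    have h1 : u^K * r ≤ (c * M^(2^n)) * r^K := by
      calc u^K * r ≤ normA A ((S^(2^n)) x) * r^K := hP n
      _ ≤ (c * M^(2^n)) * r^K := by
          apply mul_le_mul_of_nonneg_right (hgb (2^n) (by positivity)) (by positivity)
    have h2 : u^K ≤ (c * M^(2^n)) * r^K / r := by
      rw [le_div_iff₀ hr]; exact h1
    have hrhs : (0:ℝ) ≤ (c * M^(2^n)) * r^K / r := by positivity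
    have h3 : u ≤ ((c * M^(2^n)) * r^K / r) ^ ((K:ℝ))⁻¹ := by
      have := Real.rpow_le_rpow (by positivity : (0:ℝ) ≤ u^K) h2
        (by positivity : (0:ℝ) ≤ ((K:ℝ))⁻¹)
      rwa [← Real.rpow_natCast u K, ← Real.rpow_mul hu0,
        mul_inv_cancel₀ hKpos.ne', Real.rpow_one] at this
    have hMe : ((M^(2^n:ℕ) : ℝ)) ^ ((K:ℝ))⁻¹ = M^((1:ℝ)/2) := by
      rw [← Real.rpow_natCast M (2^n), ← Real.rpow_mul hM0.le]
      congr 1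
      rw [hKcast]
      push_cast
      rw [pow_succ]
      have h2n : ((2:ℝ)^n) ≠ 0 := by positivity
      field_simp
    have hre : ((r^(K:ℕ) : ℝ)) ^ ((K:ℝ))⁻¹ = r := by
      rw [← Real.rpow_natCast r K, ← Real.rpow_mul hr0, mul_inv_cancel₀ hKpos.ne',
        Real.rpow_one]
    have hdecomp : ((c * M^(2^n)) * r^K / r) ^ ((K:ℝ))⁻¹
        = c^(((K:ℝ))⁻¹) * M^((1:ℝ)/2) * r / r^(((K:ℝ))⁻¹) := by
      rw [Real.div_rpow (by positivity) hr0,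
        Real.mul_rpow (by positivity) (by positivity),
        Real.mul_rpow (by positivity) (by positivity), hMe, hre]
    rw [hdecomp] at h3
    rw [← hKcast]
    exact h3
  -- pass to the limit
  have hε : Filter.Tendsto (fun n : ℕ => ((2:ℝ)^(n+1))⁻¹) Filter.atTop (nhds 0) := by
    have h2 : Filter.Tendsto (fun n : ℕ => ((2:ℝ)⁻¹)^n) Filter.atTop (nhds 0) :=
      tendsto_pow_atTop_nhds_zero_of_lt_one (by norm_num) (by norm_num)
    have h3 := h2.comp (Filter.tendsto_add_atTop_nat 1)
    simpa [Function.comp_def, inv_pow] using h3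
  have hFcont : ContinuousAt (fun t : ℝ => c^t * M^((1:ℝ)/2) * r / r^t) 0 := by
    have hc : ContinuousAt (fun t : ℝ => c ^ t) 0 := Real.continuousAt_const_rpow hc0.ne'
    have hrt : ContinuousAt (fun t : ℝ => r ^ t) 0 := Real.continuousAt_const_rpow hr.ne'
    exact ((hc.mul continuousAt_const).mul continuousAt_const).div hrt
      (by norm_num [Real.rpow_zero])
  have hF0 : (fun t : ℝ => c^t * M^((1:ℝ)/2) * r / r^t) 0 = M^((1:ℝ)/2) * r := by
    norm_num [Real.rpow_zero]
  have hlim : Filter.Tendsto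
      (fun n : ℕ => c^(((2:ℝ)^(n+1))⁻¹) * M^((1:ℝ)/2) * r / r^(((2:ℝ)^(n+1))⁻¹))
      Filter.atTop (nhds (M^((1:ℝ)/2) * r)) := by
    have h := (hFcont.tendsto).comp hε
    have e : c ^ (0:ℝ) * M ^ ((1:ℝ)/2) * r / r ^ (0:ℝ) = M ^ ((1:ℝ)/2) * r := by
      norm_num [Real.rpow_zero]
    rw [e] at h
    exact h
  have hle : u ≤ M^((1:ℝ)/2) * r := ge_of_tendsto' hlim hstep
  rw [Real.sqrt_eq_rpow]
  exact hle

lemma wA_nonneg (A T : H →L[ℂ] H) : 0 ≤ wA A T := by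
  apply Real.sSup_nonneg
  rintro r ⟨x, hx, rfl⟩
  positivity

lemma wAe_nonneg (A B C : H →L[ℂ] H) : 0 ≤ wAe A B C := by
  apply Real.sSup_nonneg
  rintro r ⟨x, hx, rfl⟩
  positivity

lemma wA_le {T : H →L[ℂ] H} {m : ℝ} (hm : 0 ≤ m)
    (h : ∀ x : H, normA A x = 1 → ‖innerA A (T x) x‖ ≤ m) : wA A T ≤ m := by
  apply Real.sSup_le _ hm
  rintro r ⟨x, hx, rfl⟩
  exact h x hx

lemma wA_bddAbove (hA : A.IsPositive) {T Ts : H →L[ℂ] H}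
    (hT : A.comp Ts = (ContinuousLinearMap.adjoint T).comp A) :
    BddAbove {r : ℝ | ∃ x : H, normA A x = 1 ∧ r = ‖innerA A (T x) x‖} := by
  obtain ⟨k, hk0, hk⟩ := abound hA hT
  refine ⟨k, ?_⟩
  rintro r ⟨x, hx, rfl⟩
  calc ‖innerA A (T x) x‖ ≤ normA A (T x) * normA A x := innerA_cs hA (T x) x
  _ ≤ (k * normA A x) * normA A x :=
      mul_le_mul_of_nonneg_right (hk x) (normA_nonneg x)
  _ = k := by rw [hx]; ring

lemma le_wA (hA : A.IsPositive) {T Ts : H →L[ℂ] H}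
    (hT : A.comp Ts = (ContinuousLinearMap.adjoint T).comp A) {x : H} (hx : normA A x = 1) :
    ‖innerA A (T x) x‖ ≤ wA A T :=
  le_csSup (wA_bddAbove hA hT) ⟨x, hx, rfl⟩

lemma innerA_smul_vec (c : ℂ) (u v : H) :
    innerA A (c • u) v = c * innerA A u v := by
  simp [innerA, map_smul, inner_smul_right]

lemma innerA_add_vec (u v y : H) :
    innerA A (u + v) y = innerA A u y + innerA A v y := by
  simp [innerA, map_add, inner_add_right]

lemma innerA_quad_smul (c : ℝ) (T : H →L[ℂ] H) (z : H) :
    innerA A (T ((c:ℂ) • z)) ((c:ℂ) • z) = ((c^2 : ℝ) : ℂ) * innerA A (T z) z := by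
  rw [map_smul, innerA_smul_vec]
  rw [innerA, inner_smul_left, innerA, Complex.conj_ofReal]
  push_cast
  ring

lemma wA_quad (hA : A.IsPositive) {T Ts : H →L[ℂ] H}
    (hT : A.comp Ts = (ContinuousLinearMap.adjoint T).comp A) (z : H) :
    ‖innerA A (T z) z‖ ≤ wA A T * (normA A z)^2 := by
  by_cases hz : normA A z = 0
  · have h1 : ‖innerA A (T z) z‖ ≤ normA A (T z) * normA A z :=
      innerA_cs hA (T z) z
    rw [hz, mul_zero] at h1
    rw [hz]
    simpa using h1
  · have hz0 : 0 < normA A z := lt_of_le_of_ne (normA_nonneg z) (Ne.symm hz)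
    set c : ℝ := (normA A z)⁻¹ with hc
    have hc0 : 0 < c := by positivity
    have hunit : normA A ((c:ℂ) • z) = 1 := by
      rw [normA_smul hA, Complex.norm_real, Real.norm_eq_abs, abs_of_pos hc0, hc]
      exact inv_mul_cancel₀ hz
    have h2 := le_wA hA hT hunit
    rw [innerA_quad_smul c T z] at h2
    rw [norm_mul] at h2
    rw [Complex.norm_real, Real.norm_eq_abs] at h2
    have : |c^2| * ‖innerA A (T z) z‖ ≤ wA A T := h2
    rw [abs_of_pos (by positivity : (0:ℝ) < c^2)] at this
    have h3 : ‖innerA A (T z) z‖ ≤ wA A T / c^2 := by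
      rw [le_div_iff₀ (by positivity)]
      linarith [this]
    calc ‖innerA A (T z) z‖ ≤ wA A T / c^2 := h3
    _ = wA A T * (normA A z)^2 := by
        rw [hc]
        field_simp

lemma innerA_swap (hA : A.IsPositive) {R : H →L[ℂ] H}
    (hR : A.comp R = (ContinuousLinearMap.adjoint R).comp A) (x y : H) :
    innerA A (R y) x = (starRingEnd ℂ) (innerA A (R x) y) := by
  have h1 : A (R y) = (ContinuousLinearMap.adjoint R) (A y) :=
    ContinuousLinearMap.ext_iff.mp hR y
  rw [innerA, h1, ContinuousLinearMap.adjoint_inner_right]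
  rw [innerA, ← inner_conj_symm, inner_A_symm hA]

lemma selfadj_norm_le (hA : A.IsPositive) {R : H →L[ℂ] H}
    (hR : A.comp R = (ContinuousLinearMap.adjoint R).comp A) {x : H} (hx : normA A x = 1) :
    normA A (R x) ≤ wA A R := by
  by_cases h0 : normA A (R x) = 0
  · rw [h0]; exact wA_nonneg A R
  have hRx : 0 < normA A (R x) := lt_of_le_of_ne (normA_nonneg _) (Ne.symm h0)
  set c : ℝ := (normA A (R x))⁻¹ with hc
  have hc0 : 0 < c := by positivity
  set y : H := (c:ℂ) • (R x) with hy
  have hyunit : normA A y = 1 := by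
    rw [hy, normA_smul hA, Complex.norm_real, Real.norm_eq_abs, abs_of_pos hc0, hc]
    exact inv_mul_cancel₀ h0
  -- re of innerA A (R x) y equals normA A (R x)
  have hre : (innerA A (R x) y).re = normA A (R x) := by
    have : innerA A (R x) y = ((c:ℝ):ℂ) * innerA A (R x) (R x) := by
      rw [hy, innerA, inner_smul_left, Complex.conj_ofReal, innerA]
    rw [this, Complex.re_ofReal_mul]
    have : (innerA A (R x) (R x)).re = (normA A (R x))^2 := (normA_sq hA _).symm
    rw [this, hc]
    field_simp
  -- polarization
  have hswap : innerA A (R y) x = (starRingEnd ℂ) (innerA A (R x) y) := innerA_swap hA hR x y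
  have hq : ∀ z : H, (innerA A (R z) z).re ≤ wA A R * (normA A z)^2 := fun z =>
    le_trans (Complex.re_le_norm _) (wA_quad hA hR z)
  have hq' : ∀ z : H, -(wA A R * (normA A z)^2) ≤ (innerA A (R z) z).re := by
    intro z
    have h1 := wA_quad hA hR z
    have h2 : |(innerA A (R z) z).re| ≤ ‖innerA A (R z) z‖ :=
      Complex.abs_re_le_norm _
    have h3 := abs_le.mp (le_trans h2 h1)
    linarith [h3.1]
  set a : ℂ := innerA A (R x) y with ha
  have hexp : innerA A (R (x+y)) (x+y) - innerA A (R (x-y)) (x-y)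
      = 2 * (a + (starRingEnd ℂ) a) := by
    rw [ha, ← hswap]
    simp only [innerA, map_add, map_sub, inner_add_left, inner_add_right,
      inner_sub_left, inner_sub_right]
    ring
  have e1 : (innerA A (R (x+y)) (x+y)).re - (innerA A (R (x-y)) (x-y)).re = 4 * a.re := by
    have h := congrArg Complex.re hexp
    rw [Complex.sub_re] at h
    rw [h]
    simp [Complex.mul_re, Complex.add_re, Complex.conj_re, Complex.conj_im]
    ring
  have hpar : (normA A (x+y))^2 + (normA A (x-y))^2
      = 2*(normA A x)^2 + 2*(normA A y)^2 := by
    rw [normA_sq hA, normA_sq hA, normA_sq hA, normA_sq hA]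
    have hc : innerA A (x+y) (x+y) + innerA A (x-y) (x-y)
        = 2*innerA A x x + 2*innerA A y y := by
      simp only [innerA, map_add, map_sub, inner_add_left, inner_add_right,
        inner_sub_left, inner_sub_right]
      ring
    have h := congrArg Complex.re hc
    rw [Complex.add_re] at h
    rw [h]
    simp [Complex.mul_re]
  have hbound : 4 * a.re ≤ 4 * wA A R := by
    have h1 := hq (x+y)
    have h2 := hq' (x-y)
    have h3 : (innerA A (R (x+y)) (x+y)).re - (innerA A (R (x-y)) (x-y)).re
        ≤ wA A R * ((normA A (x+y))^2 + (normA A (x-y))^2) := by nlinarith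
    rw [hpar, hx, hyunit] at h3
    rw [← e1]
    calc (innerA A (R (x+y)) (x+y)).re - (innerA A (R (x-y)) (x-y)).re
        ≤ wA A R * (2*1^2 + 2*1^2) := h3
    _ = 4 * wA A R := by ring
  rw [ha] at hre
  linarith [hbound, hre]

lemma adj_symm (hA : A.IsPositive) {T Ts : H →L[ℂ] H}
    (hT : A.comp Ts = (ContinuousLinearMap.adjoint T).comp A) :
    A.comp T = (ContinuousLinearMap.adjoint Ts).comp A := by
  have h := congrArg ContinuousLinearMap.adjoint hT
  rw [ContinuousLinearMap.adjoint_comp, ContinuousLinearMap.adjoint_comp,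
    ContinuousLinearMap.adjoint_adjoint, hA.isSelfAdjoint.adjoint_eq] at h
  exact h.symm

lemma smul_adj (hA : A.IsPositive) {T Ts : H →L[ℂ] H}
    (hT : A.comp Ts = (ContinuousLinearMap.adjoint T).comp A) (w : ℂ) :
    A.comp ((starRingEnd ℂ w) • Ts) = (ContinuousLinearMap.adjoint (w • T)).comp A := by
  have hadj : ContinuousLinearMap.adjoint (w • T)
      = (starRingEnd ℂ w) • ContinuousLinearMap.adjoint T := by
    rw [← ContinuousLinearMap.star_eq_adjoint, ← ContinuousLinearMap.star_eq_adjoint, star_smul]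
    rfl
  rw [hadj]
  ext v
  simp only [ContinuousLinearMap.comp_apply, ContinuousLinearMap.smul_apply, map_smul]
  congr 1
  exact ContinuousLinearMap.ext_iff.mp hT v

lemma comp_adj (hA : A.IsPositive) {M Ms N Ns : H →L[ℂ] H}
    (hM : A.comp Ms = (ContinuousLinearMap.adjoint M).comp A)
    (hN : A.comp Ns = (ContinuousLinearMap.adjoint N).comp A) :
    A.comp (Ns.comp Ms) = (ContinuousLinearMap.adjoint (M.comp N)).comp A := by
  rw [ContinuousLinearMap.adjoint_comp]
  ext v
  have h1 : A (Ns (Ms v)) = (ContinuousLinearMap.adjoint N) (A (Ms v)) :=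
    ContinuousLinearMap.ext_iff.mp hN (Ms v)
  have h2 : A (Ms v) = (ContinuousLinearMap.adjoint M) (A v) :=
    ContinuousLinearMap.ext_iff.mp hM v
  simp only [ContinuousLinearMap.comp_apply]
  rw [h1, h2]

lemma sq_bound (hA : A.IsPositive) {T Ts : H →L[ℂ] H}
    (hT : A.comp Ts = (ContinuousLinearMap.adjoint T).comp A) {x : H} (hx : normA A x = 1) :
    ‖innerA A (T (T x)) x‖ ≤ (wA A T)^2 := by
  by_cases hz0 : innerA A (T (T x)) x = 0
  · rw [hz0]
    simpa using pow_nonneg (wA_nonneg A T) 2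
  set z : ℂ := innerA A (T (T x)) x with hzdef
  set az : ℝ := ‖z‖ with hazdef
  have haz : 0 < az := norm_pos_iff.mpr hz0
  obtain ⟨w, hw2⟩ := IsAlgClosed.exists_pow_nat_eq ((starRingEnd ℂ) z / (az:ℂ)) two_pos
  have hwabs : ‖w‖ = 1 := by
    have h1 : (‖w‖)^2 = 1 := by
      rw [← norm_pow, hw2, norm_div, Complex.norm_conj, Complex.norm_real, Real.norm_eq_abs, ← hazdef,
        abs_of_pos haz]
      exact div_self haz.ne'
    have h0 : (‖w‖ - 1) * (‖w‖ + 1) = 0 := by nlinarith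
    rcases mul_eq_zero.mp h0 with h | h
    · linarith
    · have := norm_nonneg w
      linarith
  set S : H →L[ℂ] H := w • T with hSdef
  set Ss : H →L[ℂ] H := (starRingEnd ℂ w) • Ts with hSsdef
  have hS : A.comp Ss = (ContinuousLinearMap.adjoint S).comp A := smul_adj hA hT w
  have hS' : A.comp S = (ContinuousLinearMap.adjoint Ss).comp A := adj_symm hA hS
  have hSsq : A.comp (Ss.comp Ss) = (ContinuousLinearMap.adjoint (S.comp S)).comp A :=
    comp_adj hA hS hS
  have hzS : innerA A (S (S x)) x = (az:ℂ) := by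
    have hSS : S (S x) = (w^2) • (T (T x)) := by
      rw [hSdef]
      simp only [ContinuousLinearMap.smul_apply, map_smul, smul_smul]
      rw [pow_two]
    rw [hSS, innerA_smul_vec, hw2, ← hzdef, div_mul_eq_mul_div, mul_comm,
      Complex.mul_conj, Complex.normSq_eq_norm_sq, ← hazdef]
    rw [div_eq_iff (by exact_mod_cast haz.ne' : (az:ℂ) ≠ 0)]
    push_cast
    ring
  have hconj : innerA A (Ss (Ss x)) x = (starRingEnd ℂ) (innerA A (S (S x)) x) := by
    have h := innerA_conj hA hSsq x
    simpa [ContinuousLinearMap.comp_apply] using h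
  set R : H →L[ℂ] H := S + Ss with hRdef
  set D : H →L[ℂ] H := S - Ss with hDdef
  have hRadj : A.comp R = (ContinuousLinearMap.adjoint R).comp A := by
    rw [hRdef]
    calc A.comp (S + Ss) = A.comp S + A.comp Ss := by
          ext v
          simp [ContinuousLinearMap.comp_apply, ContinuousLinearMap.add_apply, map_add]
    _ = (ContinuousLinearMap.adjoint Ss).comp A + (ContinuousLinearMap.adjoint S).comp A := by
          rw [hS', hS]
    _ = (ContinuousLinearMap.adjoint (S + Ss)).comp A := by
          conv_rhs => rw [← ContinuousLinearMap.star_eq_adjoint, star_add]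
          rw [ContinuousLinearMap.add_comp, ContinuousLinearMap.star_eq_adjoint,
            ContinuousLinearMap.star_eq_adjoint]
          abel
  have hDadj : A.comp D = (ContinuousLinearMap.adjoint (Ss - S)).comp A := by
    rw [hDdef]
    calc A.comp (S - Ss) = A.comp S - A.comp Ss := by
          ext v
          simp [ContinuousLinearMap.comp_apply, ContinuousLinearMap.sub_apply, map_sub]
    _ = (ContinuousLinearMap.adjoint Ss).comp A - (ContinuousLinearMap.adjoint S).comp A := by
          rw [hS', hS]
    _ = (ContinuousLinearMap.adjoint (Ss - S)).comp A := by
          conv_rhs => rw [← ContinuousLinearMap.star_eq_adjoint, star_sub]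
          rw [ContinuousLinearMap.sub_comp, ContinuousLinearMap.star_eq_adjoint,
            ContinuousLinearMap.star_eq_adjoint]
  have hRrel := apply_A_adj hA hRadj
  have hDrel := apply_A_adj hA hDadj
  have hRe : (innerA A (R (R x)) x).re = (normA A (R x))^2 := by
    rw [innerA, hRrel x (R x)]
    exact (normA_sq hA (R x)).symm
  have hDe : (innerA A (D (D x)) x).re = -((normA A (D x))^2) := by
    rw [innerA, hDrel x (D x)]
    have e : (Ss - S) x = -(D x) := by
      simp [hDdef, ContinuousLinearMap.sub_apply]
    rw [e, inner_neg_left]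
    rw [Complex.neg_re]
    congr 1
    exact (normA_sq hA (D x)).symm
  have hvec : R (R x) + D (D x) = (S (S x) + Ss (Ss x)) + (S (S x) + Ss (Ss x)) := by
    simp only [hRdef, hDdef, ContinuousLinearMap.add_apply, ContinuousLinearMap.sub_apply,
      map_add, map_sub]
    abel
  have hsum : innerA A (R (R x)) x + innerA A (D (D x)) x
      = 2 * (innerA A (S (S x)) x + innerA A (Ss (Ss x)) x) := by
    rw [← innerA_add_vec, hvec]
    simp only [innerA_add_vec]
    ring
  have hre_sum : (normA A (R x))^2 - (normA A (D x))^2 = 4 * az := by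
    have h := congrArg Complex.re hsum
    rw [Complex.add_re, hRe, hDe] at h
    rw [hzS, hconj, hzS] at h
    simp only [Complex.conj_ofReal] at h
    have : (2 * ((az:ℂ) + (az:ℂ))).re = 4 * az := by
      push_cast
      simp [Complex.mul_re, Complex.add_re]
      ring
    rw [this] at h
    linarith [h]
  have haz4 : az ≤ (1/4) * (normA A (R x))^2 := by
    nlinarith [sq_nonneg (normA A (D x)), hre_sum]
  have hRx : normA A (R x) ≤ wA A R := selfadj_norm_le hA hRadj hx
  have hwR : wA A R ≤ 2 * wA A T := by
    apply wA_le (by linarith [wA_nonneg A T])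
    intro y hy
    have e1 : innerA A (R y) y = innerA A (S y) y + innerA A (Ss y) y := by
      rw [hRdef]
      simp only [ContinuousLinearMap.add_apply]
      exact innerA_add_vec _ _ _
    have e2 : innerA A (Ss y) y = (starRingEnd ℂ) (innerA A (S y) y) := innerA_conj hA hS y
    have e3 : innerA A (S y) y = w * innerA A (T y) y := by
      rw [hSdef]
      simp only [ContinuousLinearMap.smul_apply]
      exact innerA_smul_vec w _ _
    rw [e1, e2, Complex.add_conj, Complex.norm_real, Real.norm_eq_abs]
    have h4 : |2 * (innerA A (S y) y).re| ≤ 2 * ‖innerA A (S y) y‖ := by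
      rw [abs_mul, _root_.abs_two]
      have h := Complex.abs_re_le_norm (innerA A (S y) y)
      linarith
    have h5 : ‖innerA A (S y) y‖ = ‖innerA A (T y) y‖ := by
      rw [e3, norm_mul, hwabs, one_mul]
    have h6 := le_wA hA hT hy
    calc |2 * (innerA A (S y) y).re| ≤ 2 * ‖innerA A (S y) y‖ := h4
    _ = 2 * ‖innerA A (T y) y‖ := by rw [h5]
    _ ≤ 2 * wA A T := by linarith
  have hfin : az ≤ (wA A T)^2 := by
    nlinarith [normA_nonneg (A := A) (R x), wA_nonneg A R, wA_nonneg A T, hRx, hwR, haz4]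
  exact hfin

lemma innerA_sub_vec (u v y : H) :
    innerA A (u - v) y = innerA A u y - innerA A v y := by
  simp [innerA, map_sub, inner_sub_right]

lemma exists_unit (hA : A.IsPositive) (hA0 : A ≠ 0) : ∃ x : H, normA A x = 1 := by
  have hv : ∃ v : H, (⟪A v, v⟫ : ℂ) ≠ 0 := by
    by_contra h
    push_neg at h
    have hz : (A : H →ₗ[ℂ] H) = 0 := by
      rw [← inner_map_self_eq_zero]
      intro v
      exact h v
    apply hA0
    ext v
    have := LinearMap.ext_iff.mp hz v
    simpa using this
  obtain ⟨v, hv⟩ := hv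
  have hiv : innerA A v v ≠ 0 := by
    rw [innerA]
    intro h0
    apply hv
    rw [← inner_conj_symm] at h0
    have := congrArg (starRingEnd ℂ) h0
    simpa using this
  have hre0 : 0 ≤ (innerA A v v).re := innerA_self_nonneg hA v
  have hre : 0 < (innerA A v v).re := by
    rcases lt_or_eq_of_le hre0 with h | h
    · exact h
    · exfalso
      have h1 := innerA_cs hA v v
      have h2 : normA A v * normA A v = (innerA A v v).re := by
        have := normA_sq hA v
        nlinarith [this]
      rw [h2, ← h] at h1
      exact hiv (norm_eq_zero.mp (le_antisymm h1 (norm_nonneg _)))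
  have hn : 0 < normA A v := Real.sqrt_pos.mpr hre
  refine ⟨(((normA A v)⁻¹ : ℝ) : ℂ) • v, ?_⟩
  rw [normA_smul hA, Complex.norm_real, Real.norm_eq_abs, abs_of_pos (by positivity)]
  exact inv_mul_cancel₀ hn.ne'

lemma wAe_bddAbove (hA : A.IsPositive) {B C Bs Cs : H →L[ℂ] H}
    (hB : A.comp Bs = (ContinuousLinearMap.adjoint B).comp A)
    (hC : A.comp Cs = (ContinuousLinearMap.adjoint C).comp A) :
    BddAbove {r : ℝ | ∃ x : H, normA A x = 1 ∧
      r = Real.sqrt ((‖innerA A (B x) x‖)^2 + (‖innerA A (C x) x‖)^2)} := by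
  obtain ⟨kB, hkB0, hkB⟩ := abound hA hB
  obtain ⟨kC, hkC0, hkC⟩ := abound hA hC
  refine ⟨Real.sqrt (kB^2 + kC^2), ?_⟩
  rintro r ⟨x, hx, rfl⟩
  apply Real.sqrt_le_sqrt
  have h1 : ‖innerA A (B x) x‖ ≤ kB := by
    calc ‖innerA A (B x) x‖ ≤ normA A (B x) * normA A x := innerA_cs hA (B x) x
    _ ≤ (kB * normA A x) * normA A x := mul_le_mul_of_nonneg_right (hkB x) (normA_nonneg x)
    _ = kB := by rw [hx]; ring
  have h2 : ‖innerA A (C x) x‖ ≤ kC := by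
    calc ‖innerA A (C x) x‖ ≤ normA A (C x) * normA A x := innerA_cs hA (C x) x
    _ ≤ (kC * normA A x) * normA A x := mul_le_mul_of_nonneg_right (hkC x) (normA_nonneg x)
    _ = kC := by rw [hx]; ring
  have hb0 : 0 ≤ ‖innerA A (B x) x‖ := norm_nonneg _
  have hc0 : 0 ≤ ‖innerA A (C x) x‖ := norm_nonneg _
  nlinarith

lemma le_wAe (hA : A.IsPositive) {B C Bs Cs : H →L[ℂ] H}
    (hB : A.comp Bs = (ContinuousLinearMap.adjoint B).comp A)
    (hC : A.comp Cs = (ContinuousLinearMap.adjoint C).comp A) {x : H} (hx : normA A x = 1) :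
    Real.sqrt ((‖innerA A (B x) x‖)^2 + (‖innerA A (C x) x‖)^2)
      ≤ wAe A B C :=
  le_csSup (wAe_bddAbove hA hB hC) ⟨x, hx, rfl⟩


theorem stmt0 (A : H →L[ℂ] H) (hA : A.IsPositive) (hA0 : A ≠ 0)
    (B C Bs Cs : H →L[ℂ] H)
    (hB : A.comp Bs = (ContinuousLinearMap.adjoint B).comp A)
    (hC : A.comp Cs = (ContinuousLinearMap.adjoint C).comp A) :
    (1/2) * wA A (B * B + C * C)
      + (1/2) * max (wA A B) (wA A C) * |wA A (B + C) - wA A (B - C)|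
      ≤ (wAe A B C)^2 := by
  have hBC : A.comp (Bs + Cs) = (ContinuousLinearMap.adjoint (B + C)).comp A := by
    calc A.comp (Bs + Cs) = A.comp Bs + A.comp Cs := by
          ext v; simp [ContinuousLinearMap.comp_apply, ContinuousLinearMap.add_apply, map_add]
    _ = (ContinuousLinearMap.adjoint B).comp A + (ContinuousLinearMap.adjoint C).comp A := by
          rw [hB, hC]
    _ = (ContinuousLinearMap.adjoint (B + C)).comp A := by
          conv_rhs => rw [← ContinuousLinearMap.star_eq_adjoint, star_add]
          rw [ContinuousLinearMap.add_comp, ContinuousLinearMap.star_eq_adjoint,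
            ContinuousLinearMap.star_eq_adjoint]
  have hBC' : A.comp (Bs - Cs) = (ContinuousLinearMap.adjoint (B - C)).comp A := by
    calc A.comp (Bs - Cs) = A.comp Bs - A.comp Cs := by
          ext v; simp [ContinuousLinearMap.comp_apply, ContinuousLinearMap.sub_apply, map_sub]
    _ = (ContinuousLinearMap.adjoint B).comp A - (ContinuousLinearMap.adjoint C).comp A := by
          rw [hB, hC]
    _ = (ContinuousLinearMap.adjoint (B - C)).comp A := by
          conv_rhs => rw [← ContinuousLinearMap.star_eq_adjoint, star_sub]
          rw [ContinuousLinearMap.sub_comp, ContinuousLinearMap.star_eq_adjoint,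
            ContinuousLinearMap.star_eq_adjoint]
  set p : ℝ := wA A (B + C) with hpdef
  set q : ℝ := wA A (B - C) with hqdef
  set W : ℝ := wAe A B C with hWdef
  have hp0 : 0 ≤ p := wA_nonneg A _
  have hq0 : 0 ≤ q := wA_nonneg A _
  have hW0 : 0 ≤ W := wAe_nonneg A B C
  -- Step 1 : wA (B² + C²) ≤ (p² + q²)/2
  have h1 : wA A (B * B + C * C) ≤ (p^2 + q^2) / 2 := by
    apply wA_le (by positivity)
    intro x hx
    have hvec : (B+C) ((B+C) x) + (B-C) ((B-C) x)
        = (B * B + C * C) x + (B * B + C * C) x := by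
      simp only [ContinuousLinearMap.add_apply, ContinuousLinearMap.sub_apply,
        ContinuousLinearMap.mul_apply, map_add, map_sub]
      abel
    have heq : innerA A ((B+C) ((B+C) x)) x + innerA A ((B-C) ((B-C) x)) x
        = 2 * innerA A ((B * B + C * C) x) x := by
      rw [← innerA_add_vec, hvec, innerA_add_vec]
      ring
    have hb1 := sq_bound hA hBC hx
    have hb2 := sq_bound hA hBC' hx
    have habs : 2 * ‖innerA A ((B * B + C * C) x) x‖
        ≤ ‖innerA A ((B+C) ((B+C) x)) x‖
          + ‖innerA A ((B-C) ((B-C) x)) x‖ := by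
      calc 2 * ‖innerA A ((B * B + C * C) x) x‖
          = ‖2 * innerA A ((B * B + C * C) x) x‖ := by
            rw [norm_mul]
            norm_num
      _ = ‖innerA A ((B+C) ((B+C) x)) x + innerA A ((B-C) ((B-C) x)) x‖ := by
            rw [heq]
      _ ≤ _ := norm_add_le _ _
    rw [← hpdef] at hb1
    rw [← hqdef] at hb2
    linarith
  -- Step 2 : max (wA B) (wA C) ≤ (p + q)/2
  have hm : max (wA A B) (wA A C) ≤ (p + q) / 2 := by
    have hBhalf : wA A B ≤ (p + q) / 2 := by
      apply wA_le (by positivity)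
      intro x hx
      have e1 : innerA A ((B+C) x) x = innerA A (B x) x + innerA A (C x) x := by
        rw [ContinuousLinearMap.add_apply, innerA_add_vec]
      have e2 : innerA A ((B-C) x) x = innerA A (B x) x - innerA A (C x) x := by
        rw [ContinuousLinearMap.sub_apply, innerA_sub_vec]
      have h3 := le_wA hA hBC hx
      have h4 := le_wA hA hBC' hx
      rw [e1] at h3
      rw [e2] at h4
      have htri : 2 * ‖innerA A (B x) x‖
          ≤ ‖innerA A (B x) x + innerA A (C x) x‖
            + ‖innerA A (B x) x - innerA A (C x) x‖ := by
        calc 2 * ‖innerA A (B x) x‖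
            = ‖(innerA A (B x) x + innerA A (C x) x)
              + (innerA A (B x) x - innerA A (C x) x)‖ := by
              rw [show (innerA A (B x) x + innerA A (C x) x)
                + (innerA A (B x) x - innerA A (C x) x) = 2 * innerA A (B x) x by ring]
              rw [norm_mul]
              norm_num
        _ ≤ _ := norm_add_le _ _
      rw [← hpdef] at h3
      rw [← hqdef] at h4
      linarith
    have hChalf : wA A C ≤ (p + q) / 2 := by
      apply wA_le (by positivity)
      intro x hx
      have e1 : innerA A ((B+C) x) x = innerA A (B x) x + innerA A (C x) x := by
        rw [ContinuousLinearMap.add_apply, innerA_add_vec]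
      have e2 : innerA A ((B-C) x) x = innerA A (B x) x - innerA A (C x) x := by
        rw [ContinuousLinearMap.sub_apply, innerA_sub_vec]
      have h3 := le_wA hA hBC hx
      have h4 := le_wA hA hBC' hx
      rw [e1] at h3
      rw [e2] at h4
      have htri : 2 * ‖innerA A (C x) x‖
          ≤ ‖innerA A (B x) x + innerA A (C x) x‖
            + ‖innerA A (B x) x - innerA A (C x) x‖ := by
        calc 2 * ‖innerA A (C x) x‖
            = ‖(innerA A (B x) x + innerA A (C x) x)
              - (innerA A (B x) x - innerA A (C x) x)‖ := by
              rw [show (innerA A (B x) x + innerA A (C x) x)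
                - (innerA A (B x) x - innerA A (C x) x) = 2 * innerA A (C x) x by ring]
              rw [norm_mul]
              norm_num
        _ ≤ _ := by
              rw [sub_eq_add_neg]
              refine (norm_add_le _ _).trans ?_
              rw [norm_neg]
      rw [← hpdef] at h3
      rw [← hqdef] at h4
      linarith
    exact max_le hBhalf hChalf
  -- Step 3 : p, q ≤ √2 W
  have key3 : ∀ (T : H →L[ℂ] H), (∀ x : H, normA A x = 1 →
      ‖innerA A (T x) x‖ ≤ Real.sqrt ((‖innerA A (B x) x‖)^2
        + (‖innerA A (C x) x‖)^2) * Real.sqrt 2) → wA A T ≤ Real.sqrt 2 * W := by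
    intro T hT'
    apply wA_le (by positivity)
    intro x hx
    calc ‖innerA A (T x) x‖
        ≤ Real.sqrt ((‖innerA A (B x) x‖)^2
          + (‖innerA A (C x) x‖)^2) * Real.sqrt 2 := hT' x hx
    _ ≤ W * Real.sqrt 2 :=
        mul_le_mul_of_nonneg_right (le_wAe hA hB hC hx) (Real.sqrt_nonneg 2)
    _ = Real.sqrt 2 * W := mul_comm _ _
  have hsqrt_bound : ∀ x : H, ∀ u v : ℂ, ‖u + v‖ ≤
      Real.sqrt ((‖u‖)^2 + (‖v‖)^2) * Real.sqrt 2 := by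
    intro x u v
    have t1 : ‖u + v‖ ≤ ‖u‖ + ‖v‖ := norm_add_le u v
    have t2 : (‖u‖ + ‖v‖)^2
        ≤ 2 * ((‖u‖)^2 + (‖v‖)^2) := by
      nlinarith [sq_nonneg (‖u‖ - ‖v‖)]
    have t3 : ‖u‖ + ‖v‖
        ≤ Real.sqrt (2 * ((‖u‖)^2 + (‖v‖)^2)) := by
      rw [show ‖u‖ + ‖v‖
        = Real.sqrt ((‖u‖ + ‖v‖)^2) from
        (Real.sqrt_sq (by positivity)).symm]
      exact Real.sqrt_le_sqrt t2
    have t4 : Real.sqrt (2 * ((‖u‖)^2 + (‖v‖)^2))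
        = Real.sqrt 2 * Real.sqrt ((‖u‖)^2 + (‖v‖)^2) :=
      Real.sqrt_mul (by norm_num) _
    calc ‖u + v‖ ≤ ‖u‖ + ‖v‖ := t1
    _ ≤ Real.sqrt (2 * ((‖u‖)^2 + (‖v‖)^2)) := t3
    _ = Real.sqrt ((‖u‖)^2 + (‖v‖)^2) * Real.sqrt 2 := by
        rw [t4]; ring
  have hp2 : p ≤ Real.sqrt 2 * W := by
    rw [hpdef]
    apply key3
    intro x hx
    have e1 : innerA A ((B+C) x) x = innerA A (B x) x + innerA A (C x) x := by
      rw [ContinuousLinearMap.add_apply, innerA_add_vec]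
    rw [e1]
    exact hsqrt_bound x _ _
  have hq2 : q ≤ Real.sqrt 2 * W := by
    rw [hqdef]
    apply key3
    intro x hx
    have e2 : innerA A ((B-C) x) x = innerA A (B x) x + (- innerA A (C x) x) := by
      rw [ContinuousLinearMap.sub_apply, innerA_sub_vec]
      ring
    rw [e2]
    have := hsqrt_bound x (innerA A (B x) x) (- innerA A (C x) x)
    simpa using this
  -- squares
  have hpsq : p^2 ≤ 2 * W^2 := by
    have := pow_le_pow_left₀ hp0 hp2 2
    calc p^2 ≤ (Real.sqrt 2 * W)^2 := this
    _ = (Real.sqrt 2)^2 * W^2 := by ring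
    _ = 2 * W^2 := by rw [Real.sq_sqrt (by norm_num : (0:ℝ) ≤ 2)]
  have hqsq : q^2 ≤ 2 * W^2 := by
    have := pow_le_pow_left₀ hq0 hq2 2
    calc q^2 ≤ (Real.sqrt 2 * W)^2 := this
    _ = (Real.sqrt 2)^2 * W^2 := by ring
    _ = 2 * W^2 := by rw [Real.sq_sqrt (by norm_num : (0:ℝ) ≤ 2)]
  have hm0 : 0 ≤ max (wA A B) (wA A C) := le_trans (wA_nonneg A B) (le_max_left _ _)
  -- final arithmetic
  set m : ℝ := max (wA A B) (wA A C) with hmdef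
  rcases abs_cases (p - q) with ⟨he, hcase⟩ | ⟨he, hcase⟩ <;> rw [he]
  · have hprod : m * (p - q) ≤ ((p + q)/2) * (p - q) :=
      mul_le_mul_of_nonneg_right hm (by linarith)
    have h5 : m * (p - q) ≤ (p^2 - q^2)/2 := by
      calc m * (p - q) ≤ ((p + q)/2) * (p - q) := hprod
      _ = (p^2 - q^2)/2 := by ring
    linarith [h1, h5, hpsq]
  · have hprod : m * (q - p) ≤ ((p + q)/2) * (q - p) :=
      mul_le_mul_of_nonneg_right hm (by linarith)
    have h5 : m * (q - p) ≤ (q^2 - p^2)/2 := by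
      calc m * (q - p) ≤ ((p + q)/2) * (q - p) := hprod
      _ = (q^2 - p^2)/2 := by ring
    linarith [h1, h5, hqsq]
end
end

section
/- For all vectors x, y, e ∈ H with ‖e‖_A = 1, one has |⟨x,e⟩_A · ⟨e,y⟩_A| ≤ ( ‖x‖_A·‖y‖_A + |⟨x,y⟩_A| ) / 2. -/
noncomputable section

open scoped ComplexInnerProductSpace

variable {H : Type*} [NormedAddCommGroup H] [InnerProductSpace ℂ H] [CompleteSpace H]

def coreA (A : H →L[ℂ] H) (hA : A.IsPositive) : PreInnerProductSpace.Core ℂ H where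
  inner x y := ⟪x, A y⟫
  conj_inner_symm x y := by
    simp only [inner_conj_symm]
    exact hA.1 x y
  re_inner_nonneg x := hA.re_inner_nonneg_right x
  add_left x y z := by simp [inner_add_left]
  smul_left x y r := by simp [inner_smul_left]; ring

lemma innerA_conj_symm (A : H →L[ℂ] H) (hA : A.IsPositive) (x y : H) :
    innerA A y x = starRingEnd ℂ (innerA A x y) := by
  simp only [innerA, inner_conj_symm]
  exact (hA.1 x y).symm

lemma csA (A : H →L[ℂ] H) (hA : A.IsPositive) (x y : H) :
    ‖innerA A x y‖ ≤ normA A x * normA A y := by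
  letI c := coreA A hA
  have h := InnerProductSpace.Core.inner_mul_inner_self_le (𝕜 := ℂ) (c := c) y x
  have hn : ‖(c.inner x y : ℂ)‖ = ‖innerA A x y‖ := by
    rw [InnerProductSpace.Core.norm_inner_symm (c := c) x y]; rfl
  have hxy : (c.inner y x : ℂ) = innerA A x y := rfl
  have hyy : (RCLike.re (c.inner y y : ℂ) : ℝ) = (innerA A y y).re := rfl
  have hxx : (RCLike.re (c.inner x x : ℂ) : ℝ) = (innerA A x x).re := rfl
  rw [hxy, hn, hyy, hxx] at h
  have h1 : 0 ≤ (innerA A x x).re := hA.re_inner_nonneg_right x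
  have h2 : 0 ≤ (innerA A y y).re := hA.re_inner_nonneg_right y
  have hnn : 0 ≤ normA A x * normA A y :=
    mul_nonneg (Real.sqrt_nonneg _) (Real.sqrt_nonneg _)
  have hsq : ‖innerA A x y‖ ^ 2 ≤ (normA A x * normA A y) ^ 2 := by
    rw [mul_pow, normA, normA, Real.sq_sqrt h1, Real.sq_sqrt h2, sq]
    linarith [h]
  nlinarith [norm_nonneg (innerA A x y)]

theorem stmt8 (A : H →L[ℂ] H) (hA : A.IsPositive) (hA0 : A ≠ 0)
    (x y e : H) (he : normA A e = 1) :
    ‖innerA A x e * innerA A e y‖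
      ≤ (normA A x * normA A y + ‖innerA A x y‖) / 2 := by
  set a : ℂ := innerA A x e with ha
  set u : H := a • e - (2 : ℂ)⁻¹ • x with hu
  -- ⟪e, e⟫_A = 1
  have hee : innerA A e e = 1 := by
    have him : (innerA A e e).im = 0 := by
      have := innerA_conj_symm A hA e e
      have h2 := congrArg Complex.im this
      simp [Complex.conj_im] at h2
      linarith
    have hre : (innerA A e e).re = 1 := by
      have h' := he
      rw [normA] at h'
      have h0 : 0 ≤ (innerA A e e).re := hA.re_inner_nonneg_right e
      have h2 := Real.sq_sqrt h0
      rw [h'] at h2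
      simpa using h2.symm
    exact Complex.ext hre (by simpa using him)
  have hex : innerA A e x = starRingEnd ℂ a := innerA_conj_symm A hA x e
  -- expansion lemmas
  have expandL : ∀ t : H, innerA A u t = a * innerA A e t - (2 : ℂ)⁻¹ * innerA A x t := by
    intro t
    simp [innerA, hu, inner_sub_right, inner_smul_right, map_sub, map_smul]
  have expandR : ∀ t : H,
      innerA A t u = starRingEnd ℂ a * innerA A t e - (2 : ℂ)⁻¹ * innerA A t x := by
    intro t
    simp [innerA, hu, inner_sub_left, inner_smul_left, Complex.conj_ofNat, map_inv₀]
    ring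
  have huy : innerA A u y = a * innerA A e y - innerA A x y / 2 := by
    rw [expandL]; ring
  have huu : innerA A u u = innerA A x x / 4 := by
    rw [expandL, expandR, expandR, hee, hex, ← ha]
    have : a * starRingEnd ℂ a = starRingEnd ℂ a * a := by ring
    ring
  -- normA A u = normA A x / 2
  have h1 : 0 ≤ (innerA A x x).re := hA.re_inner_nonneg_right x
  have hnu : normA A u = normA A x / 2 := by
    have hre : (innerA A u u).re = (innerA A x x).re / 4 := by
      rw [huu]
      simp [Complex.div_re, Complex.normSq]
    rw [normA, normA, hre,
      show (innerA A x x).re / 4 = (innerA A x x).re / (2:ℝ) ^ 2 by ring,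
      Real.sqrt_div h1, Real.sqrt_sq (by norm_num : (0:ℝ) ≤ 2)]
  calc ‖a * innerA A e y‖
      = ‖innerA A u y + innerA A x y / 2‖ := by rw [huy]; ring_nf
    _ ≤ ‖innerA A u y‖ + ‖innerA A x y / 2‖ :=
        norm_add_le _ _
    _ ≤ normA A u * normA A y + ‖innerA A x y‖ / 2 := by
        refine add_le_add (csA A hA u y) ?_
        rw [norm_div]
        simp
    _ = (normA A x * normA A y + ‖innerA A x y‖) / 2 := by
        rw [hnu]; ring
end
end

section
/- Let B and C be bounded linear operators on H admitting A-adjoints B♯ and C♯. Then for every nonzero complex number α, (w_{A,e}(B,C))² ≤ min{ (w_A(B−C))², (w_A(B+C))² } + ( max{1, |1 − α|}·‖C♯C + BB♯‖_A + 2·w_A(BC) ) / |α|. -/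
noncomputable section

open scoped ComplexInnerProductSpace

variable {H : Type*} [NormedAddCommGroup H] [InnerProductSpace ℂ H] [CompleteSpace H]

namespace St11

open ComplexConjugate

variable {A S : H →L[ℂ] H}

lemma sa_move (hS : IsSelfAdjoint S) (a b : H) : ⟪S a, b⟫ = ⟪a, S b⟫ := by
  conv_lhs => rw [← hS.adjoint_eq]
  exact ContinuousLinearMap.adjoint_inner_left S b a

lemma iA (hS : IsSelfAdjoint S) (hSA : S ^ 2 = A) (x y : H) :
    innerA A x y = ⟪S y, S x⟫ := by
  have hAx : A x = S (S x) := by rw [← hSA, pow_two, ContinuousLinearMap.mul_apply]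
  rw [innerA, hAx, ← sa_move hS]

lemma nA (hS : IsSelfAdjoint S) (hSA : S ^ 2 = A) (x : H) : normA A x = ‖S x‖ := by
  rw [normA, iA hS hSA]
  have h : (⟪S x, S x⟫ : ℂ).re = ‖S x‖ ^ 2 := by
    rw [← RCLike.re_to_complex]
    exact inner_self_eq_norm_sq (𝕜 := ℂ) (S x)
  rw [h, Real.sqrt_sq (norm_nonneg _)]

lemma normSq_eq (hS : IsSelfAdjoint S) (hSA : S ^ 2 = A) (x : H) :
    ‖S x‖ ^ 2 = (innerA A x x).re := by
  rw [iA hS hSA, ← RCLike.re_to_complex]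
  exact (inner_self_eq_norm_sq (𝕜 := ℂ) (S x)).symm

lemma swap (hS : IsSelfAdjoint S) (hSA : S ^ 2 = A) {T Ts : H →L[ℂ] H}
    (hT : A * Ts = star T * A) (x y : H) :
    innerA A (T x) y = innerA A x (Ts y) := by
  have hA_sa : IsSelfAdjoint A := hSA ▸ hS.pow 2
  rw [iA hS hSA, iA hS hSA]
  have h1 : (⟪S (Ts y), S x⟫ : ℂ) = ⟪Ts y, A x⟫ := by
    rw [sa_move hS]
    congr 1
    rw [← hSA, pow_two, ContinuousLinearMap.mul_apply]
  have h2 : (⟪Ts y, A x⟫ : ℂ) = ⟪A (Ts y), x⟫ := (sa_move hA_sa (Ts y) x).symm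
  have h3 : A (Ts y) = (ContinuousLinearMap.adjoint T) (A y) := by
    have h := congrFun (congrArg DFunLike.coe hT) y
    simpa [ContinuousLinearMap.mul_apply, ContinuousLinearMap.star_eq_adjoint] using h
  have h4 : (⟪(ContinuousLinearMap.adjoint T) (A y), x⟫ : ℂ) = ⟪A y, T x⟫ :=
    ContinuousLinearMap.adjoint_inner_left T x (A y)
  have h5 : (⟪A y, T x⟫ : ℂ) = ⟪y, A (T x)⟫ := sa_move hA_sa y (T x)
  have h6 : (⟪y, A (T x)⟫ : ℂ) = ⟪S y, S (T x)⟫ := by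
    have : A (T x) = S (S (T x)) := by rw [← hSA, pow_two, ContinuousLinearMap.mul_apply]
    rw [this, ← sa_move hS]
  rw [h1, h2, h3, h4, h5, h6]

lemma abs_le (hS : IsSelfAdjoint S) (hSA : S ^ 2 = A) (x y : H) :
    ‖innerA A x y‖ ≤ ‖S x‖ * ‖S y‖ := by
  rw [iA hS hSA]
  exact le_of_le_of_eq (norm_inner_le_norm _ _) (mul_comm _ _)

lemma sq_le' (hS : IsSelfAdjoint S) (hSA : S ^ 2 = A) {T : H →L[ℂ] H}
    (hT : A * T = star T * A) (y : H) :
    ‖S (T y)‖ ^ 2 ≤ ‖S (T (T y))‖ * ‖S y‖ := by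
  have h1 : ‖S (T y)‖ ^ 2 = (innerA A (T y) (T y)).re := normSq_eq hS hSA (T y)
  have h2 : innerA A (T y) (T y) = innerA A y (T (T y)) := swap hS hSA hT y (T y)
  calc ‖S (T y)‖ ^ 2 = (innerA A y (T (T y))).re := by rw [h1, h2]
    _ ≤ ‖innerA A y (T (T y))‖ := Complex.re_le_norm _
    _ ≤ ‖S y‖ * ‖S (T (T y))‖ := abs_le hS hSA _ _
    _ = ‖S (T (T y))‖ * ‖S y‖ := mul_comm _ _

lemma pow_sa {T : H →L[ℂ] H} (hT : A * T = star T * A) (n : ℕ) :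
    A * (T ^ n) = star (T ^ n) * A := by
  induction n with
  | zero => simp
  | succ n ih =>
    have h : A * T ^ (n + 1) = star (T ^ n) * (star T * A) := by
      rw [pow_succ, ← mul_assoc, ih, mul_assoc, hT]
    rw [h, ← mul_assoc, ← star_mul, ← pow_succ']

lemma bound_sa (hS : IsSelfAdjoint S) (hSA : S ^ 2 = A) {T : H →L[ℂ] H}
    (hT : A * T = star T * A) {x : H} (hx : ‖S x‖ = 1) : ‖S (T x)‖ ≤ ‖T‖ := by
  have key : ∀ n : ℕ, ∀ y : H,
      ‖S (T y)‖ ^ (2 ^ n) ≤ ‖S ((T ^ (2 ^ n)) y)‖ * ‖S y‖ ^ (2 ^ n - 1) := by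
    intro n
    induction n with
    | zero => intro y; simp
    | succ n ih =>
      intro y
      have h2n : 1 ≤ 2 ^ n := Nat.one_le_two_pow
      have e1 : 2 ^ (n + 1) = 2 ^ n * 2 := by rw [pow_succ]
      have e2 : (2 ^ n - 1) * 2 + 1 = 2 ^ (n + 1) - 1 := by
        rw [pow_succ]; omega
      have step : ‖S (T y)‖ ^ 2 ^ (n + 1) = (‖S (T y)‖ ^ 2 ^ n) ^ 2 := by
        rw [e1, pow_mul]
      have h1 : (‖S (T y)‖ ^ 2 ^ n) ^ 2 ≤ (‖S ((T ^ 2 ^ n) y)‖ * ‖S y‖ ^ (2 ^ n - 1)) ^ 2 :=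
        pow_le_pow_left₀ (pow_nonneg (norm_nonneg _) _) (ih y) 2
      have h2 : ‖S ((T ^ 2 ^ n) y)‖ ^ 2 ≤ ‖S ((T ^ 2 ^ (n + 1)) y)‖ * ‖S y‖ := by
        have h := sq_le' hS hSA (pow_sa hT (2 ^ n)) y
        have hpow : (T ^ 2 ^ n) ((T ^ 2 ^ n) y) = (T ^ 2 ^ (n + 1)) y := by
          rw [e1, pow_mul, pow_two, ContinuousLinearMap.mul_apply]
        rwa [hpow] at h
      calc ‖S (T y)‖ ^ 2 ^ (n + 1) = (‖S (T y)‖ ^ 2 ^ n) ^ 2 := step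
        _ ≤ (‖S ((T ^ 2 ^ n) y)‖ * ‖S y‖ ^ (2 ^ n - 1)) ^ 2 := h1
        _ = ‖S ((T ^ 2 ^ n) y)‖ ^ 2 * (‖S y‖ ^ (2 ^ n - 1)) ^ 2 := by ring
        _ ≤ (‖S ((T ^ 2 ^ (n + 1)) y)‖ * ‖S y‖) * (‖S y‖ ^ (2 ^ n - 1)) ^ 2 := by
            exact mul_le_mul_of_nonneg_right h2 (pow_nonneg (pow_nonneg (norm_nonneg _) _) 2)
        _ = ‖S ((T ^ 2 ^ (n + 1)) y)‖ * ‖S y‖ ^ (2 ^ (n + 1) - 1) := by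
            rw [mul_assoc, ← pow_mul, ← pow_succ', e2]
  have hn : ∀ n : ℕ, ‖S (T x)‖ ^ (2 ^ n) ≤ (‖S‖ * ‖x‖) * ‖T‖ ^ (2 ^ n) := by
    intro n
    have h1 := key n x
    rw [hx, one_pow, mul_one] at h1
    have h2 : ‖S ((T ^ 2 ^ n) x)‖ ≤ ‖S‖ * (‖T‖ ^ 2 ^ n * ‖x‖) := by
      calc ‖S ((T ^ 2 ^ n) x)‖ ≤ ‖S‖ * ‖(T ^ 2 ^ n) x‖ := S.le_opNorm _
        _ ≤ ‖S‖ * (‖T ^ 2 ^ n‖ * ‖x‖) :=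
            mul_le_mul_of_nonneg_left ((T ^ 2 ^ n).le_opNorm x) (norm_nonneg S)
        _ ≤ ‖S‖ * (‖T‖ ^ 2 ^ n * ‖x‖) := by
            refine mul_le_mul_of_nonneg_left ?_ (norm_nonneg S)
            exact mul_le_mul_of_nonneg_right (norm_pow_le' T (pow_pos two_pos n)) (norm_nonneg x)
    calc ‖S (T x)‖ ^ (2 ^ n) ≤ ‖S ((T ^ 2 ^ n) x)‖ := h1
      _ ≤ ‖S‖ * (‖T‖ ^ 2 ^ n * ‖x‖) := h2
      _ = (‖S‖ * ‖x‖) * ‖T‖ ^ (2 ^ n) := by ring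
  by_cases hTz : T = 0
  · simp [hTz]
  have hT0 : 0 < ‖T‖ := norm_pos_iff.mpr hTz
  by_contra hcon
  push_neg at hcon
  set a := ‖S (T x)‖ with ha
  set b := ‖T‖ with hb
  have hr : 1 < a / b := (one_lt_div hT0).mpr hcon
  obtain ⟨n, hcn⟩ := pow_unbounded_of_one_lt (‖S‖ * ‖x‖) hr
  have h1 : (a / b) ^ n ≤ (a / b) ^ (2 ^ n) :=
    pow_le_pow_right₀ hr.le (Nat.lt_two_pow_self (n := n)).le
  have h2 : (a / b) ^ (2 ^ n) ≤ ‖S‖ * ‖x‖ := by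
    rw [div_pow, div_le_iff₀ (pow_pos hT0 _)]
    exact hn n
  linarith

lemma bound_adj (hS : IsSelfAdjoint S) (hSA : S ^ 2 = A) {T Ts : H →L[ℂ] H}
    (hT : A * Ts = star T * A) {x : H} (hx : ‖S x‖ = 1) :
    ‖S (T x)‖ ≤ Real.sqrt ‖Ts * T‖ := by
  have hA_sa : IsSelfAdjoint A := hSA ▸ hS.pow 2
  have hTsA : star Ts * A = A * T := by
    have h := congrArg star hT
    rw [star_mul, star_mul, hA_sa.star_eq, star_star] at h
    exact h
  have hsa : A * (Ts * T) = star (Ts * T) * A := by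
    calc A * (Ts * T) = (A * Ts) * T := by rw [mul_assoc]
      _ = star T * (A * T) := by rw [hT, mul_assoc]
      _ = star T * (star Ts * A) := by rw [hTsA]
      _ = star (Ts * T) * A := by rw [star_mul, mul_assoc]
  have h1 : ‖S (T x)‖ ^ 2 ≤ ‖Ts * T‖ := by
    calc ‖S (T x)‖ ^ 2 = (innerA A (T x) (T x)).re := normSq_eq hS hSA (T x)
      _ = (innerA A x (Ts (T x))).re := by rw [swap hS hSA hT x (T x)]
      _ ≤ ‖innerA A x (Ts (T x))‖ := Complex.re_le_norm _
      _ ≤ ‖S x‖ * ‖S (Ts (T x))‖ := abs_le hS hSA _ _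
      _ = ‖S ((Ts * T) x)‖ := by rw [hx, one_mul, ContinuousLinearMap.mul_apply]
      _ ≤ ‖Ts * T‖ := bound_sa hS hSA hsa hx
  have h2 := Real.sqrt_le_sqrt h1
  rwa [Real.sqrt_sq (norm_nonneg _)] at h2

lemma bdd_w (hS : IsSelfAdjoint S) (hSA : S ^ 2 = A) {T Ts : H →L[ℂ] H}
    (hT : A * Ts = star T * A) :
    BddAbove {r : ℝ | ∃ x : H, normA A x = 1 ∧ r = ‖innerA A (T x) x‖} := by
  refine ⟨Real.sqrt ‖Ts * T‖, ?_⟩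
  rintro r ⟨x, hx, rfl⟩
  rw [nA hS hSA] at hx
  calc ‖innerA A (T x) x‖ ≤ ‖S (T x)‖ * ‖S x‖ := abs_le hS hSA _ _
    _ = ‖S (T x)‖ := by rw [hx, mul_one]
    _ ≤ Real.sqrt ‖Ts * T‖ := bound_adj hS hSA hT hx

lemma bdd_op (hS : IsSelfAdjoint S) (hSA : S ^ 2 = A) {T : H →L[ℂ] H}
    (hT : A * T = star T * A) :
    BddAbove {r : ℝ | ∃ x : H, normA A x = 1 ∧ r = normA A (T x)} := by
  refine ⟨‖T‖, ?_⟩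
  rintro r ⟨x, hx, rfl⟩
  rw [nA hS hSA] at hx
  rw [nA hS hSA]
  exact bound_sa hS hSA hT hx

lemma buzano (p U V : H) (hp : ‖p‖ = 1) (α : ℂ) :
    ‖α‖ * (‖(⟪p, U⟫ : ℂ)‖ * ‖(⟪p, V⟫ : ℂ)‖) ≤
      ‖(⟪U, V⟫ : ℂ)‖ + max 1 ‖1 - α‖ * (‖U‖ * ‖V‖) := by
  set t : ℂ := ⟪p, U⟫ with ht
  set q : H := (α * t) • p - U with hqdef
  have hqV : (⟪q, V⟫ : ℂ) = conj (α * t) * ⟪p, V⟫ - ⟪U, V⟫ := by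
    rw [hqdef, inner_sub_left, inner_smul_left]
  have habs : ‖α‖ * (‖t‖ * ‖(⟪p, V⟫ : ℂ)‖) = ‖conj (α * t) * ⟪p, V⟫‖ := by
    rw [norm_mul, RCLike.norm_conj, norm_mul, mul_assoc]
  have hstep : ‖conj (α * t) * ⟪p, V⟫‖ ≤ ‖(⟪U, V⟫ : ℂ)‖ + ‖q‖ * ‖V‖ := by
    have h : conj (α * t) * ⟪p, V⟫ = ⟪U, V⟫ + ⟪q, V⟫ := by rw [hqV]; ring
    rw [h]
    calc ‖(⟪U, V⟫ : ℂ) + ⟪q, V⟫‖ ≤ ‖(⟪U, V⟫ : ℂ)‖ + ‖(⟪q, V⟫ : ℂ)‖ := norm_add_le _ _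
      _ ≤ ‖(⟪U, V⟫ : ℂ)‖ + ‖q‖ * ‖V‖ := by
          have h2 := norm_inner_le_norm (𝕜 := ℂ) q V
          linarith
  have htU : ‖t‖ ≤ ‖U‖ := by
    have h := norm_inner_le_norm (𝕜 := ℂ) p U
    rwa [hp, one_mul] at h
  have hqsq : ‖q‖ ^ 2 = ‖t‖ ^ 2 * (‖1 - α‖ ^ 2 - 1) + ‖U‖ ^ 2 := by
    have h1 : ‖q‖ ^ 2 = ‖(α * t) • p‖ ^ 2 - 2 * RCLike.re (⟪(α * t) • p, U⟫ : ℂ) + ‖U‖ ^ 2 :=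
      norm_sub_sq ((α * t) • p) U
    have h2 : ‖(α * t) • p‖ ^ 2 = ‖α‖ ^ 2 * ‖t‖ ^ 2 := by
      rw [norm_smul, hp, mul_one, norm_mul, mul_pow]
    have h3 : (⟪(α * t) • p, U⟫ : ℂ) = conj α * (conj t * t) := by
      rw [inner_smul_left, ← ht, map_mul]; ring
    have h4 : conj t * t = ((‖t‖ ^ 2 : ℝ) : ℂ) := by
      have hns : Complex.normSq t = ‖t‖ ^ 2 := by rw [← Complex.sq_norm]
      rw [mul_comm, Complex.mul_conj, hns]
    have h5 : RCLike.re (conj α * ((‖t‖ ^ 2 : ℝ) : ℂ)) = α.re * ‖t‖ ^ 2 := by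
      simp only [RCLike.re_to_complex, Complex.mul_re, Complex.conj_re, Complex.conj_im,
        Complex.ofReal_re, Complex.ofReal_im]
      ring
    have h6 : ‖(1 : ℂ) - α‖ ^ 2 = 1 - 2 * α.re + ‖α‖ ^ 2 := by
      rw [Complex.sq_norm, Complex.sq_norm]
      simp [Complex.normSq_apply, Complex.sub_re, Complex.sub_im]
      ring
    rw [h1, h2, h3, h4, h5, h6]
    ring
  have hq : ‖q‖ ≤ max 1 ‖1 - α‖ * ‖U‖ := by
    have hsq : ‖q‖ ^ 2 ≤ (max 1 ‖1 - α‖ * ‖U‖) ^ 2 := by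
      rcases le_total ‖1 - α‖ 1 with hmax | hmax
      · rw [max_eq_left hmax, one_mul]
        have h1a : ‖1 - α‖ ^ 2 ≤ 1 := by nlinarith [norm_nonneg (1 - α)]
        nlinarith [sq_nonneg ‖t‖]
      · rw [max_eq_right hmax, mul_pow]
        have h2a : ‖t‖ ^ 2 ≤ ‖U‖ ^ 2 := by nlinarith [norm_nonneg t, norm_nonneg U]
        have h3a : (0:ℝ) ≤ ‖1 - α‖ ^ 2 - 1 := by nlinarith [norm_nonneg (1 - α)]
        nlinarith [mul_le_mul_of_nonneg_right h2a h3a]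
    have h7 := Real.sqrt_le_sqrt hsq
    rwa [Real.sqrt_sq (norm_nonneg _),
      Real.sqrt_sq (mul_nonneg (le_trans zero_le_one (le_max_left _ _)) (norm_nonneg _))] at h7
  calc ‖α‖ * (‖t‖ * ‖(⟪p, V⟫ : ℂ)‖) = ‖conj (α * t) * ⟪p, V⟫‖ := habs
    _ ≤ ‖(⟪U, V⟫ : ℂ)‖ + ‖q‖ * ‖V‖ := hstep
    _ ≤ ‖(⟪U, V⟫ : ℂ)‖ + max 1 ‖1 - α‖ * (‖U‖ * ‖V‖) := by
        have h0 : (0:ℝ) ≤ ‖V‖ := norm_nonneg _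
        have h8 := mul_le_mul_of_nonneg_right hq h0
        rw [mul_assoc] at h8
        linarith

end St11

open ComplexConjugate in
set_option maxHeartbeats 1000000 in
set_option synthInstance.maxHeartbeats 1000000 in
theorem stmt11 (A : H →L[ℂ] H) (hA : A.IsPositive) (hA0 : A ≠ 0)
    (B C Bs Cs : H →L[ℂ] H)
    (hB : A.comp Bs = (ContinuousLinearMap.adjoint B).comp A)
    (hC : A.comp Cs = (ContinuousLinearMap.adjoint C).comp A)
    (α : ℂ) (hα : α ≠ 0) :
    (wAe A B C)^2
      ≤ min ((wA A (B - C))^2) ((wA A (B + C))^2)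
          + (max 1 (‖1 - α‖) * opNormA A (Cs * C + B * Bs)
              + 2 * wA A (B * C)) / ‖α‖ := by
  have h0 : (0 : H →L[ℂ] H) ≤ A := (ContinuousLinearMap.nonneg_iff_isPositive A).mpr hA
  set S := CFC.sqrt A with hSdef
  have hS : IsSelfAdjoint S := IsSelfAdjoint.of_nonneg (CFC.sqrt_nonneg (a := A))
  have hSA : S ^ 2 = A := CFC.sq_sqrt A h0
  have hA_sa : IsSelfAdjoint A := hA.isSelfAdjoint
  have hB' : A * Bs = star B * A := by
    rw [ContinuousLinearMap.mul_def, ContinuousLinearMap.mul_def,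
      ContinuousLinearMap.star_eq_adjoint]
    exact hB
  have hC' : A * Cs = star C * A := by
    rw [ContinuousLinearMap.mul_def, ContinuousLinearMap.mul_def,
      ContinuousLinearMap.star_eq_adjoint]
    exact hC
  have hBsA : star Bs * A = A * B := by
    have h := congrArg star hB'
    rw [star_mul, star_mul, hA_sa.star_eq, star_star] at h
    exact h
  have hCsA : star Cs * A = A * C := by
    have h := congrArg star hC'
    rw [star_mul, star_mul, hA_sa.star_eq, star_star] at h
    exact h
  have hBmC : A * (Bs - Cs) = star (B - C) * A := by
    rw [mul_sub, hB', hC', star_sub, sub_mul]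
  have hBpC : A * (Bs + Cs) = star (B + C) * A := by
    rw [mul_add, hB', hC', star_add, add_mul]
  have hBC : A * (Cs * Bs) = star (B * C) * A := by
    rw [← mul_assoc, hC', mul_assoc, hB', ← mul_assoc, ← star_mul]
  have hD : A * (Cs * C + B * Bs) = star (Cs * C + B * Bs) * A := by
    have e1 : A * (Cs * C) = star C * A * C := by rw [← mul_assoc, hC']
    have e2 : A * (B * Bs) = star Bs * A * Bs := by rw [← mul_assoc, ← hBsA]
    have e3 : star (Cs * C + B * Bs) * A = star C * A * C + star Bs * A * Bs := by
      rw [star_add, star_mul, star_mul, add_mul, mul_assoc (star C), hCsA,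
        mul_assoc (star Bs), ← hB', ← mul_assoc, ← mul_assoc]
    rw [mul_add, e1, e2, e3]
  have bdd1 := St11.bdd_w hS hSA hBmC
  have bdd2 := St11.bdd_w hS hSA hBpC
  have bdd3 := St11.bdd_w hS hSA hBC
  have bddD := St11.bdd_op hS hSA hD
  have hwBC0 : 0 ≤ wA A (B * C) := by
    apply Real.sSup_nonneg
    rintro r ⟨x, hx, rfl⟩
    exact norm_nonneg _
  have hop0 : 0 ≤ opNormA A (Cs * C + B * Bs) := by
    apply Real.sSup_nonneg
    rintro r ⟨x, hx, rfl⟩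
    exact Real.sqrt_nonneg _
  have hα' : 0 < ‖α‖ := norm_pos_iff.mpr hα
  have hM1 : (1 : ℝ) ≤ max 1 (‖1 - α‖) := le_max_left _ _
  set RHS := min ((wA A (B - C))^2) ((wA A (B + C))^2)
      + (max 1 (‖1 - α‖) * opNormA A (Cs * C + B * Bs)
          + 2 * wA A (B * C)) / ‖α‖ with hRHSdef
  have hRHS0 : 0 ≤ RHS := by
    apply add_nonneg (le_min (sq_nonneg _) (sq_nonneg _))
    apply div_nonneg _ (norm_nonneg α)
    have := mul_nonneg (le_trans zero_le_one hM1) hop0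
    linarith
  have key : ∀ x : H, normA A x = 1 →
      (‖innerA A (B x) x‖)^2 + (‖innerA A (C x) x‖)^2 ≤ RHS := by
    intro x hx
    have hx' : ‖S x‖ = 1 := by rw [← St11.nA hS hSA]; exact hx
    set β := innerA A (B x) x with hβ
    set γ := innerA A (C x) x with hγ
    have hsub : β - γ = innerA A ((B - C) x) x := by
      simp [hβ, hγ, innerA, ContinuousLinearMap.sub_apply, map_sub, inner_sub_right]
    have hadd : β + γ = innerA A ((B + C) x) x := by
      simp [hβ, hγ, innerA, ContinuousLinearMap.add_apply, map_add, inner_add_right]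
    have hm : ‖β - γ‖ ≤ wA A (B - C) := by
      rw [hsub]; exact le_csSup bdd1 ⟨x, hx, rfl⟩
    have hpl : ‖β + γ‖ ≤ wA A (B + C) := by
      rw [hadd]; exact le_csSup bdd2 ⟨x, hx, rfl⟩
    have hre2 : |(β * conj γ).re| ≤ ‖β‖ * ‖γ‖ := by
      calc |(β * conj γ).re| ≤ ‖β * conj γ‖ := Complex.abs_re_le_norm _
        _ = ‖β‖ * ‖γ‖ := by rw [norm_mul, Complex.norm_conj]
    obtain ⟨hreL, hreR⟩ := abs_le.mp hre2
    have hid1 : (‖β - γ‖)^2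
        = (‖β‖)^2 + (‖γ‖)^2 - 2*(β * conj γ).re := by
      simp only [Complex.sq_norm, Complex.normSq_apply, Complex.sub_re, Complex.sub_im,
        Complex.mul_re, Complex.conj_re, Complex.conj_im]
      ring
    have hid2 : (‖β + γ‖)^2
        = (‖β‖)^2 + (‖γ‖)^2 + 2*(β * conj γ).re := by
      simp only [Complex.sq_norm, Complex.normSq_apply, Complex.add_re, Complex.add_im,
        Complex.mul_re, Complex.conj_re, Complex.conj_im]
      ring
    have hsq1 : (‖β - γ‖)^2 ≤ (wA A (B - C))^2 :=
      pow_le_pow_left₀ (norm_nonneg _) hm 2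
    have hsq2 : (‖β + γ‖)^2 ≤ (wA A (B + C))^2 :=
      pow_le_pow_left₀ (norm_nonneg _) hpl 2
    have step1 : (‖β‖)^2 + (‖γ‖)^2
        ≤ min ((wA A (B - C))^2) ((wA A (B + C))^2)
          + 2*(‖β‖ * ‖γ‖) := by
      rcases le_total ((wA A (B - C))^2) ((wA A (B + C))^2) with h | h
      · rw [min_eq_left h]; nlinarith
      · rw [min_eq_right h]; nlinarith
    -- Buzano part
    set p := S x with hpdef
    set U := S (Bs x) with hUdef
    set V := S (C x) with hVdef
    have hβU : (⟪p, U⟫ : ℂ) = conj β := by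
      have h1 : β = innerA A x (Bs x) := by rw [hβ, St11.swap hS hSA hB' x x]
      have h2 : innerA A x (Bs x) = ⟪U, p⟫ := St11.iA hS hSA x (Bs x)
      rw [h1, h2]
      exact (inner_conj_symm p U).symm
    have hγV : (⟪p, V⟫ : ℂ) = γ := (St11.iA hS hSA (C x) x).symm
    have hUV : (⟪U, V⟫ : ℂ) = innerA A ((B * C) x) x := by
      calc (⟪U, V⟫ : ℂ) = innerA A (C x) (Bs x) := (St11.iA hS hSA (C x) (Bs x)).symm
        _ = innerA A (B (C x)) x := (St11.swap hS hSA hB' (C x) x).symm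
        _ = innerA A ((B * C) x) x := by rw [ContinuousLinearMap.mul_apply]
    have hUVw : ‖(⟪U, V⟫ : ℂ)‖ ≤ wA A (B * C) := by
      rw [hUV]; exact le_csSup bdd3 ⟨x, hx, rfl⟩
    have hU2 : ‖U‖^2 = (innerA A ((B * Bs) x) x).re := by
      rw [hUdef, St11.normSq_eq hS hSA (Bs x)]
      congr 1
      calc innerA A (Bs x) (Bs x) = innerA A (B (Bs x)) x := (St11.swap hS hSA hB' (Bs x) x).symm
        _ = innerA A ((B * Bs) x) x := by rw [ContinuousLinearMap.mul_apply]
    have hV2 : ‖V‖^2 = (innerA A ((Cs * C) x) x).re := by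
      rw [hVdef, St11.normSq_eq hS hSA (C x)]
      congr 1
      calc innerA A (C x) (C x) = innerA A (Cs (C x)) x :=
            (St11.swap hS hSA hCsA.symm (C x) x).symm
        _ = innerA A ((Cs * C) x) x := by rw [ContinuousLinearMap.mul_apply]
    have hsum : ‖U‖^2 + ‖V‖^2 ≤ opNormA A (Cs * C + B * Bs) := by
      have hDx : innerA A ((Cs * C + B * Bs) x) x
          = innerA A ((Cs * C) x) x + innerA A ((B * Bs) x) x := by
        simp [innerA, ContinuousLinearMap.add_apply, map_add, inner_add_right]
      have h1 : ‖U‖^2 + ‖V‖^2 = (innerA A ((Cs * C + B * Bs) x) x).re := by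
        rw [hDx, Complex.add_re, hU2, hV2]; ring
      rw [h1]
      calc (innerA A ((Cs * C + B * Bs) x) x).re
          ≤ ‖innerA A ((Cs * C + B * Bs) x) x‖ := Complex.re_le_norm _
        _ ≤ ‖S ((Cs * C + B * Bs) x)‖ * ‖S x‖ := St11.abs_le hS hSA _ _
        _ = normA A ((Cs * C + B * Bs) x) := by rw [hx', mul_one, St11.nA hS hSA]
        _ ≤ opNormA A (Cs * C + B * Bs) := le_csSup bddD ⟨x, hx, rfl⟩
    have hbuz := St11.buzano p U V hx' α
    rw [hβU, hγV] at hbuz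
    rw [RCLike.norm_conj] at hbuz
    have hUVn : (‖U‖ * ‖V‖) * 2 ≤ ‖U‖^2 + ‖V‖^2 := by nlinarith [sq_nonneg (‖U‖ - ‖V‖)]
    have hM0 : (0:ℝ) ≤ max 1 (‖1 - α‖) := le_trans zero_le_one hM1
    have step2 : 2*(‖β‖ * ‖γ‖)
        ≤ (max 1 (‖1 - α‖) * opNormA A (Cs * C + B * Bs)
            + 2 * wA A (B * C)) / ‖α‖ := by
      rw [le_div_iff₀ hα']
      have e : ‖α‖ * (‖β‖ * ‖γ‖)
          ≤ wA A (B * C) + max 1 (‖1 - α‖) * (‖U‖ * ‖V‖) := le_trans hbuz (by linarith)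
      have e2 : max 1 (‖1 - α‖) * ((‖U‖ * ‖V‖) * 2)
          ≤ max 1 (‖1 - α‖) * opNormA A (Cs * C + B * Bs) :=
        mul_le_mul_of_nonneg_left (le_trans hUVn hsum) hM0
      nlinarith
    calc (‖β‖)^2 + (‖γ‖)^2
        ≤ min ((wA A (B - C))^2) ((wA A (B + C))^2)
          + 2*(‖β‖ * ‖γ‖) := step1
      _ ≤ RHS := by rw [hRHSdef]; linarith
  have hle : wAe A B C ≤ Real.sqrt RHS := by
    apply Real.sSup_le _ (Real.sqrt_nonneg _)
    rintro r ⟨x, hx, rfl⟩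
    exact Real.sqrt_le_sqrt (key x hx)
  have h0w : 0 ≤ wAe A B C := by
    apply Real.sSup_nonneg
    rintro r ⟨x, hx, rfl⟩
    exact Real.sqrt_nonneg _
  calc (wAe A B C)^2 ≤ (Real.sqrt RHS)^2 := pow_le_pow_left₀ h0w hle 2
    _ = RHS := Real.sq_sqrt hRHS0
end
end
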